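/- Let n, m, Δ be natural numbers and let A and B be independent random matrices taking values in F_2^{(n+Δ)×m}, defined on a finite (discrete) probability space. Then H(A ⊕ S^Δ B) − 2·H(S^Δ A ⊕ S^Δ B) ≤ m · Δ, where H denotes Shannon entropy with logarithm base 2 and ⊕ is entrywise addition modulo 2. -/

import Mathlib

/-- Down-shift operator `S^Δ` on matrices over `F₂`: shifts rows down by `Δ`,
filling the top `Δ` rows with zeros. -/
def shiftS (Δ : ℕ) {r c : ℕ} (X : Matrix (Fin r) (Fin c) (ZMod 2)) :
    Matrix (Fin r) (Fin c) (ZMod 2) :=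
  fun i j => if _h : Δ ≤ (i : ℕ) then
      X ⟨(i : ℕ) - Δ, lt_of_le_of_lt (Nat.sub_le _ _) i.isLt⟩ j
    else 0

/-- The function `φ(p,q)`: with `l = p div q` (convention `p div 0 = 0`),
`φ(p,q) = q + l·q/2` for `l` even, `φ(p,q) = p − (l−1)·q/2` for `l` odd. -/
def phi (p q : ℕ) : ℕ :=
  if Even (p / q) then q + (p / q / 2) * q else p - ((p / q - 1) / 2) * q

/-- Probability that the random variable `f` takes the value `a`, for the
discrete probability mass function `p`. -/
noncomputable def prEq {Ω α : Type*} [Fintype Ω] [DecidableEq α]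
    (p : Ω → ℝ) (f : Ω → α) (a : α) : ℝ :=
  ∑ ω ∈ Finset.univ.filter (fun ω => f ω = a), p ω

/-- Shannon entropy (base 2) of the random variable `f` under the pmf `p`. -/
noncomputable def entropy2 {Ω α : Type*} [Fintype Ω] [Fintype α] [DecidableEq α]
    (p : Ω → ℝ) (f : Ω → α) : ℝ :=
  -∑ a : α, prEq p f a * Real.logb 2 (prEq p f a)

/-- Independence of two random variables under the pmf `p`. -/
def IndepRV {Ω α β : Type*} [Fintype Ω] [DecidableEq α] [DecidableEq β]
    (p : Ω → ℝ) (f : Ω → α) (g : Ω → β) : Prop :=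
  ∀ a b, prEq p (fun ω => (f ω, g ω)) (a, b) = prEq p f a * prEq p g b

/-- Mutual independence of three random variables under the pmf `p`. -/
def MutIndep3 {Ω α β γ : Type*} [Fintype Ω] [DecidableEq α] [DecidableEq β]
    [DecidableEq γ] (p : Ω → ℝ) (f : Ω → α) (g : Ω → β) (h : Ω → γ) : Prop :=
  ∀ a b c, prEq p (fun ω => (f ω, g ω, h ω)) (a, b, c)
      = prEq p f a * prEq p g b * prEq p h c

/-- Mutual information (base 2) `I(f; g) = H(f) + H(g) − H(f, g)`. -/
noncomputable def mutInfo2 {Ω α β : Type*} [Fintype Ω] [Fintype α] [Fintype β]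
    [DecidableEq α] [DecidableEq β] (p : Ω → ℝ) (f : Ω → α) (g : Ω → β) : ℝ :=
  entropy2 p f + entropy2 p g - entropy2 p (fun ω => (f ω, g ω))

/-- Number of ones in a vector over `F₂`. -/
def wt {n : ℕ} (a : Fin n → ZMod 2) : ℕ :=
  (Finset.univ.filter (fun i => a i = 1)).card

/-- `γ1(a)`: complement of `a` stacked over the all-ones vector of length `Δ`. -/
def gamma1 (Δ : ℕ) {nM : ℕ} (a : Fin nM → ZMod 2) : Fin (nM + Δ) → ZMod 2 :=
  fun i => if h : (i : ℕ) < nM then 1 - a ⟨(i : ℕ), h⟩ else 1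

/-- `γ2(a)`: the zero vector of length `Δ` stacked over the complement of `a`. -/
def gamma2 (Δ : ℕ) {nM : ℕ} (a : Fin nM → ZMod 2) : Fin (nM + Δ) → ZMod 2 :=
  fun i => if _h : Δ ≤ (i : ℕ) then
      1 - a ⟨(i : ℕ) - Δ, by have := i.isLt; omega⟩
    else 0

/-- The overlap `γ1(a)^T γ2(a)`: number of positions where both are one. -/
def overlap (Δ : ℕ) {nM : ℕ} (a : Fin nM → ZMod 2) : ℕ :=
  (Finset.univ.filter (fun i => gamma1 Δ a i = 1 ∧ gamma2 Δ a i = 1)).card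

/-- `ρ(x)`: minimal overlap over all vectors `a ∈ F₂^{n_M}` with `|a| = x`. -/
noncomputable def rho (Δ nM x : ℕ) : ℕ :=
  sInf (overlap Δ '' {a : Fin nM → ZMod 2 | wt a = x})

section InfoTheory

open Finset

variable {Ω : Type} [Fintype Ω]

lemma prEq_nonneg {α : Type*} [DecidableEq α] {p : Ω → ℝ} (hp : ∀ ω, 0 ≤ p ω)
    (f : Ω → α) (a : α) : 0 ≤ prEq p f a :=
  Finset.sum_nonneg fun ω _ => hp ω

lemma sum_prEq {α : Type*} [Fintype α] [DecidableEq α] {p : Ω → ℝ}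
    (hsum : ∑ ω, p ω = 1) (f : Ω → α) : ∑ a : α, prEq p f a = 1 := by
  rw [← hsum]
  exact Finset.sum_fiberwise _ _ _

lemma prEq_comp {α β : Type*} [Fintype α] [DecidableEq α] [DecidableEq β]
    (p : Ω → ℝ) (f : Ω → α) (e : α → β) (b : β) :
    prEq p (fun ω => e (f ω)) b
      = ∑ a ∈ Finset.univ.filter (fun a => e a = b), prEq p f a := by
  classical
  unfold prEq
  rw [← Finset.sum_fiberwise_of_maps_to (g := f)
      (t := Finset.univ.filter fun a => e a = b)
      (fun ω hω => by
        simp only [Finset.mem_filter, Finset.mem_univ, true_and] at hω ⊢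
        exact hω) p]
  refine Finset.sum_congr rfl fun a ha => Finset.sum_congr ?_ fun _ _ => rfl
  have hea : e a = b := (Finset.mem_filter.mp ha).2
  ext ω
  simp only [Finset.mem_filter, Finset.mem_univ, true_and]
  constructor
  · rintro ⟨-, h⟩; exact h
  · intro h; exact ⟨by rw [h, hea], h⟩

lemma prEq_fst {α β : Type*} [Fintype α] [Fintype β] [DecidableEq α] [DecidableEq β]
    (p : Ω → ℝ) (f : Ω → α) (g : Ω → β) (a : α) :
    prEq p f a = ∑ b : β, prEq p (fun ω => (f ω, g ω)) (a, b) := by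
  classical
  unfold prEq
  rw [← Finset.sum_fiberwise (Finset.univ.filter fun ω => f ω = a) g p]
  refine Finset.sum_congr rfl fun b _ => Finset.sum_congr ?_ fun _ _ => rfl
  ext ω
  simp only [Finset.mem_filter, Finset.mem_univ, true_and, Prod.mk.injEq]
  try tauto

lemma prEq_snd {α β : Type*} [Fintype α] [Fintype β] [DecidableEq α] [DecidableEq β]
    (p : Ω → ℝ) (f : Ω → α) (g : Ω → β) (b : β) :
    prEq p g b = ∑ a : α, prEq p (fun ω => (f ω, g ω)) (a, b) := by
  classical
  unfold prEq
  rw [← Finset.sum_fiberwise (Finset.univ.filter fun ω => g ω = b) f p]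
  refine Finset.sum_congr rfl fun a _ => Finset.sum_congr ?_ fun _ _ => rfl
  ext ω
  simp only [Finset.mem_filter, Finset.mem_univ, true_and, Prod.mk.injEq]
  try tauto

lemma indepRV_comp {α β α' β' : Type*} [Fintype α] [Fintype β]
    [DecidableEq α] [DecidableEq β] [DecidableEq α'] [DecidableEq β']
    {p : Ω → ℝ} {f : Ω → α} {g : Ω → β}
    (h : IndepRV p f g) (e : α → α') (u : β → β') :
    IndepRV p (fun ω => e (f ω)) (fun ω => u (g ω)) := by
  intro a b
  have h1 : prEq p (fun ω => (e (f ω), u (g ω))) (a, b)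
      = ∑ z ∈ Finset.univ.filter (fun z : α × β => (e z.1, u z.2) = (a, b)),
          prEq p (fun ω => (f ω, g ω)) z :=
    prEq_comp p (fun ω => (f ω, g ω)) (fun z => (e z.1, u z.2)) (a, b)
  have h2 : Finset.univ.filter (fun z : α × β => (e z.1, u z.2) = (a, b))
      = (Finset.univ.filter fun x => e x = a) ×ˢ (Finset.univ.filter fun y => u y = b) := by
    ext ⟨x, y⟩
    simp [Prod.ext_iff]
  rw [h1, h2, Finset.sum_product, prEq_comp p f e a, prEq_comp p g u b,
    Finset.sum_mul_sum]
  exact Finset.sum_congr rfl fun x _ => Finset.sum_congr rfl fun y _ => h x y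

/-- The (natural-log) sum `∑ P log P`. -/
noncomputable def slog {α : Type*} [Fintype α] [DecidableEq α] (p : Ω → ℝ) (f : Ω → α) : ℝ :=
  ∑ a : α, prEq p f a * Real.log (prEq p f a)

lemma entropy2_eq_slog {α : Type*} [Fintype α] [DecidableEq α] (p : Ω → ℝ) (f : Ω → α) :
    entropy2 p f = -slog p f / Real.log 2 := by
  unfold entropy2 slog
  rw [neg_div, Finset.sum_div]
  congr 1
  refine Finset.sum_congr rfl fun a _ => ?_
  rw [Real.logb, mul_div_assoc]

lemma slog_comp {α β : Type*} [Fintype α] [Fintype β] [DecidableEq α] [DecidableEq β]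
    {p : Ω → ℝ} (hp : ∀ ω, 0 ≤ p ω) (f : Ω → α) (e : α → β) :
    slog p f ≤ slog p (fun ω => e (f ω)) := by
  classical
  unfold slog
  rw [← Finset.sum_fiberwise Finset.univ e (fun a => prEq p f a * Real.log (prEq p f a))]
  refine Finset.sum_le_sum fun b _ => ?_
  rw [prEq_comp p f e b, Finset.sum_mul]
  refine Finset.sum_le_sum fun a ha => ?_
  have hPa : 0 ≤ prEq p f a := prEq_nonneg hp f a
  rcases eq_or_lt_of_le hPa with h0 | h0
  · rw [← h0]; simp
  · have hle : prEq p f a ≤ ∑ a ∈ Finset.univ.filter (fun a => e a = b), prEq p f a :=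
      Finset.single_le_sum (fun i _ => prEq_nonneg hp f i) ha
    exact mul_le_mul_of_nonneg_left (Real.log_le_log h0 hle) hPa

lemma slog_pair_ge {α β : Type*} [Fintype α] [Fintype β] [DecidableEq α] [DecidableEq β]
    {p : Ω → ℝ} (hp : ∀ ω, 0 ≤ p ω) (hsum : ∑ ω, p ω = 1)
    (f : Ω → α) (g : Ω → β) :
    slog p f + slog p g ≤ slog p (fun ω => (f ω, g ω)) := by
  classical
  set P : α × β → ℝ := prEq p (fun ω => (f ω, g ω)) with hP
  set q : α → ℝ := prEq p f with hq
  set r : β → ℝ := prEq p g with hr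
  have hPnn : ∀ z, 0 ≤ P z := fun z => prEq_nonneg hp _ z
  have hqnn : ∀ a, 0 ≤ q a := fun a => prEq_nonneg hp _ a
  have hrnn : ∀ b, 0 ≤ r b := fun b => prEq_nonneg hp _ b
  have hqm : ∀ a, q a = ∑ b : β, P (a, b) := fun a => prEq_fst p f g a
  have hrm : ∀ b, r b = ∑ a : α, P (a, b) := fun b => prEq_snd p f g b
  have h1 : slog p f = ∑ a : α, ∑ b : β, P (a, b) * Real.log (q a) := by
    unfold slog
    refine Finset.sum_congr rfl fun a _ => ?_
    rw [show prEq p f a * Real.log (prEq p f a) = (∑ b : β, P (a, b)) * Real.log (q a) by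
      rw [← hqm a]]
    rw [Finset.sum_mul]
  have h2 : slog p g = ∑ a : α, ∑ b : β, P (a, b) * Real.log (r b) := by
    unfold slog
    rw [Finset.sum_comm]
    refine Finset.sum_congr rfl fun b _ => ?_
    rw [show prEq p g b * Real.log (prEq p g b) = (∑ a : α, P (a, b)) * Real.log (r b) by
      rw [← hrm b]]
    rw [Finset.sum_mul]
  have h3 : slog p (fun ω => (f ω, g ω)) = ∑ a : α, ∑ b : β, P (a, b) * Real.log (P (a, b)) := by
    unfold slog
    rw [Fintype.sum_prod_type]
  have key : ∀ a b, P (a, b) * Real.log (q a) + P (a, b) * Real.log (r b)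
      ≤ P (a, b) * Real.log (P (a, b)) - P (a, b) + q a * r b := by
    intro a b
    rcases eq_or_lt_of_le (hPnn (a, b)) with h0 | h0
    · rw [← h0]
      have h9 : 0 ≤ q a * r b := mul_nonneg (hqnn a) (hrnn b)
      simp only [zero_mul, add_zero, zero_add, sub_zero]
      linarith
    · have hqa : 0 < q a := lt_of_lt_of_le h0 (by
        rw [hqm a]
        exact Finset.single_le_sum (fun b' _ => hPnn (a, b')) (Finset.mem_univ b))
      have hrb : 0 < r b := lt_of_lt_of_le h0 (by
        rw [hrm b]
        exact Finset.single_le_sum (fun a' _ => hPnn (a', b)) (Finset.mem_univ a))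
      have hlog : Real.log (q a * r b / P (a, b)) ≤ q a * r b / P (a, b) - 1 :=
        Real.log_le_sub_one_of_pos (by positivity)
      have hrw : Real.log (q a * r b / P (a, b))
          = Real.log (q a) + Real.log (r b) - Real.log (P (a, b)) := by
        rw [Real.log_div (by positivity) h0.ne', Real.log_mul hqa.ne' hrb.ne']
      have h5 : P (a, b) * (Real.log (q a) + Real.log (r b) - Real.log (P (a, b)))
          ≤ P (a, b) * (q a * r b / P (a, b) - 1) :=
        mul_le_mul_of_nonneg_left (hrw ▸ hlog) h0.le
      have h6 : P (a, b) * (q a * r b / P (a, b) - 1) = q a * r b - P (a, b) := by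
        field_simp
      have h8 : P (a, b) * Real.log (q a) + P (a, b) * Real.log (r b)
            - P (a, b) * Real.log (P (a, b)) ≤ q a * r b - P (a, b) := by
        calc P (a, b) * Real.log (q a) + P (a, b) * Real.log (r b)
              - P (a, b) * Real.log (P (a, b))
            = P (a, b) * (Real.log (q a) + Real.log (r b) - Real.log (P (a, b))) := by ring
          _ ≤ P (a, b) * (q a * r b / P (a, b) - 1) := h5
          _ = q a * r b - P (a, b) := h6
      linarith
  have hsumP : ∑ a : α, ∑ b : β, P (a, b) = 1 := by
    rw [← Fintype.sum_prod_type]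
    exact sum_prEq hsum _
  have hsumqr : ∑ a : α, ∑ b : β, q a * r b = 1 := by
    rw [← Finset.sum_mul_sum]
    rw [sum_prEq hsum f, sum_prEq hsum g, one_mul]
  have hmain : ∑ a : α, ∑ b : β, (P (a, b) * Real.log (q a) + P (a, b) * Real.log (r b))
      ≤ ∑ a : α, ∑ b : β, (P (a, b) * Real.log (P (a, b)) - P (a, b) + q a * r b) :=
    Finset.sum_le_sum fun a _ => Finset.sum_le_sum fun b _ => key a b
  have hL : ∑ a : α, ∑ b : β, (P (a, b) * Real.log (q a) + P (a, b) * Real.log (r b))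
      = slog p f + slog p g := by
    rw [h1, h2, ← Finset.sum_add_distrib]
    exact Finset.sum_congr rfl fun a _ => Finset.sum_add_distrib
  have hR : ∑ a : α, ∑ b : β, (P (a, b) * Real.log (P (a, b)) - P (a, b) + q a * r b)
      = slog p (fun ω => (f ω, g ω)) - 1 + 1 := by
    rw [h3]
    simp only [Finset.sum_add_distrib, Finset.sum_sub_distrib]
    rw [hsumP, hsumqr]
  rw [hL, hR] at hmain
  linarith

lemma slog_pair_of_indep {α β : Type*} [Fintype α] [Fintype β] [DecidableEq α] [DecidableEq β]
    {p : Ω → ℝ} (hsum : ∑ ω, p ω = 1) {f : Ω → α} {g : Ω → β}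
    (h : IndepRV p f g) :
    slog p (fun ω => (f ω, g ω)) = slog p f + slog p g := by
  classical
  have key : ∀ (x y : ℝ), x * y * Real.log (x * y)
      = (x * Real.log x) * y + x * (y * Real.log y) := by
    intro x y
    rcases eq_or_ne x 0 with hx | hx
    · simp [hx]
    rcases eq_or_ne y 0 with hy | hy
    · simp [hy]
    rw [Real.log_mul hx hy]; ring
  unfold slog
  rw [Fintype.sum_prod_type]
  have hstep : ∀ a : α, ∑ b : β, prEq p (fun ω => (f ω, g ω)) (a, b)
        * Real.log (prEq p (fun ω => (f ω, g ω)) (a, b))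
      = (prEq p f a * Real.log (prEq p f a)) * (∑ b : β, prEq p g b)
        + prEq p f a * (∑ b : β, prEq p g b * Real.log (prEq p g b)) := by
    intro a
    calc ∑ b : β, prEq p (fun ω => (f ω, g ω)) (a, b)
          * Real.log (prEq p (fun ω => (f ω, g ω)) (a, b))
        = ∑ b : β, ((prEq p f a * Real.log (prEq p f a)) * prEq p g b
            + prEq p f a * (prEq p g b * Real.log (prEq p g b))) := by
          refine Finset.sum_congr rfl fun b _ => ?_
          rw [h a b, key]
      _ = (prEq p f a * Real.log (prEq p f a)) * (∑ b : β, prEq p g b)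
            + prEq p f a * (∑ b : β, prEq p g b * Real.log (prEq p g b)) := by
          rw [Finset.sum_add_distrib, ← Finset.mul_sum, ← Finset.mul_sum]
  simp only [hstep]
  rw [Finset.sum_add_distrib]
  simp only [sum_prEq hsum g, mul_one]
  rw [← Finset.sum_mul, sum_prEq hsum f, one_mul]

lemma neg_log_card_le_slog {α : Type*} [Fintype α] [DecidableEq α] {p : Ω → ℝ}
    (hp : ∀ ω, 0 ≤ p ω) (hsum : ∑ ω, p ω = 1) (f : Ω → α)
    (hcard : 0 < Fintype.card α) :
    -(Real.log (Fintype.card α)) ≤ slog p f := by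
  classical
  set nn : ℝ := (Fintype.card α : ℝ) with hnn
  have hn : 0 < nn := by rw [hnn]; exact_mod_cast hcard
  have key : ∀ a : α, prEq p f a - 1 / nn
      ≤ prEq p f a * Real.log nn + prEq p f a * Real.log (prEq p f a) := by
    intro a
    rcases eq_or_lt_of_le (prEq_nonneg hp f a) with h0 | h0
    · rw [← h0]
      have h9 : (0:ℝ) < 1 / nn := by positivity
      simp only [zero_mul, add_zero, zero_sub, zero_add]
      linarith
    · have hlog : Real.log (1 / (nn * prEq p f a)) ≤ 1 / (nn * prEq p f a) - 1 :=
        Real.log_le_sub_one_of_pos (by positivity)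
      have hrw : Real.log (1 / (nn * prEq p f a))
          = -(Real.log nn + Real.log (prEq p f a)) := by
        rw [one_div, Real.log_inv, Real.log_mul hn.ne' h0.ne']
      have h5 : prEq p f a * (-(Real.log nn + Real.log (prEq p f a)))
          ≤ prEq p f a * (1 / (nn * prEq p f a) - 1) :=
        mul_le_mul_of_nonneg_left (hrw ▸ hlog) h0.le
      have h6 : prEq p f a * (1 / (nn * prEq p f a) - 1) = 1 / nn - prEq p f a := by
        field_simp
      have h7 : prEq p f a * (-(Real.log nn + Real.log (prEq p f a)))
          = -(prEq p f a * Real.log nn + prEq p f a * Real.log (prEq p f a)) := by ring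
      rw [h7, h6] at h5
      linarith
  have hmain := Finset.sum_le_sum fun a (_ : a ∈ Finset.univ) => key a
  rw [Finset.sum_sub_distrib, sum_prEq hsum f, Finset.sum_add_distrib, ← Finset.sum_mul,
    sum_prEq hsum f, one_mul] at hmain
  have hcc : ∑ _a : α, (1 : ℝ) / nn = 1 := by
    rw [Finset.sum_const, Finset.card_univ, nsmul_eq_mul, ← hnn]
    field_simp
  rw [hcc] at hmain
  unfold slog
  linarith

lemma entropy2_comp_le {α β : Type*} [Fintype α] [Fintype β] [DecidableEq α] [DecidableEq β]
    {p : Ω → ℝ} (hp : ∀ ω, 0 ≤ p ω) (f : Ω → α) (e : α → β) :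
    entropy2 p (fun ω => e (f ω)) ≤ entropy2 p f := by
  rw [entropy2_eq_slog, entropy2_eq_slog]
  exact div_le_div_of_nonneg_right (neg_le_neg (slog_comp hp f e)) (Real.log_nonneg one_le_two)

lemma entropy2_pair_le {α β : Type*} [Fintype α] [Fintype β] [DecidableEq α] [DecidableEq β]
    {p : Ω → ℝ} (hp : ∀ ω, 0 ≤ p ω) (hsum : ∑ ω, p ω = 1) (f : Ω → α) (g : Ω → β) :
    entropy2 p (fun ω => (f ω, g ω)) ≤ entropy2 p f + entropy2 p g := by
  rw [entropy2_eq_slog, entropy2_eq_slog, entropy2_eq_slog, ← add_div]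
  refine div_le_div_of_nonneg_right ?_ (Real.log_nonneg one_le_two)
  have := slog_pair_ge hp hsum f g
  linarith

lemma entropy2_pair_of_indep {α β : Type*} [Fintype α] [Fintype β] [DecidableEq α]
    [DecidableEq β] {p : Ω → ℝ} (hsum : ∑ ω, p ω = 1) {f : Ω → α} {g : Ω → β}
    (h : IndepRV p f g) :
    entropy2 p (fun ω => (f ω, g ω)) = entropy2 p f + entropy2 p g := by
  rw [entropy2_eq_slog, entropy2_eq_slog, entropy2_eq_slog, ← add_div,
    slog_pair_of_indep hsum h]
  ring_nf

lemma entropy2_le_log_card {α : Type*} [Fintype α] [DecidableEq α] {p : Ω → ℝ}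
    (hp : ∀ ω, 0 ≤ p ω) (hsum : ∑ ω, p ω = 1) (f : Ω → α) (hcard : 0 < Fintype.card α) :
    entropy2 p f ≤ Real.logb 2 (Fintype.card α) := by
  rw [entropy2_eq_slog, Real.logb]
  refine div_le_div_of_nonneg_right ?_ (Real.log_nonneg one_le_two)
  have := neg_log_card_le_slog hp hsum f hcard
  linarith

end InfoTheory

section MatrixHelpers

/-- The bottom `Δ` rows of a matrix with `n + Δ` rows, as a plain function. -/
def botRows (n Δ m : ℕ) (X : Matrix (Fin (n + Δ)) (Fin m) (ZMod 2)) :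
    Fin Δ → Fin m → ZMod 2 :=
  fun i j => X ⟨n + (i : ℕ), by omega⟩ j

/-- Reconstruction of a matrix from its down-shift and its bottom rows. -/
def recon (n Δ m : ℕ) (Y : Matrix (Fin (n + Δ)) (Fin m) (ZMod 2))
    (Z : Fin Δ → Fin m → ZMod 2) : Matrix (Fin (n + Δ)) (Fin m) (ZMod 2) :=
  fun i j => if h : (i : ℕ) < n then Y ⟨(i : ℕ) + Δ, by omega⟩ j
    else Z ⟨(i : ℕ) - n, by have := i.isLt; omega⟩ j

lemma recon_shift (n Δ m : ℕ) (X : Matrix (Fin (n + Δ)) (Fin m) (ZMod 2)) :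
    recon n Δ m (shiftS Δ X) (botRows n Δ m X) = X := by
  funext i j
  unfold recon shiftS botRows
  by_cases h : (i : ℕ) < n
  · rw [dif_pos h, dif_pos (show Δ ≤ ((⟨(i : ℕ) + Δ, by omega⟩ : Fin (n + Δ)) : ℕ) by simp)]
    congr 1
    exact Fin.ext (by simp)
  · rw [dif_neg h]
    congr 1
    exact Fin.ext (by simp; omega)

lemma zmod2_matrix_aux1 {r c : ℕ} (a sa sb : Matrix (Fin r) (Fin c) (ZMod 2)) :
    a + sb = (sa + sb) + (a + sa) := by
  funext i j
  simp only [Matrix.add_apply]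
  have : ∀ x y z : ZMod 2, x + z = y + z + (x + y) := by decide
  exact this _ _ _

lemma zmod2_matrix_aux2 {r c : ℕ} (u v : Matrix (Fin r) (Fin c) (ZMod 2)) :
    (u + v) + v = u := by
  funext i j
  simp only [Matrix.add_apply]
  have : ∀ x y : ZMod 2, x + y + y = x := by decide
  exact this _ _

end MatrixHelpers

/-- Lemma 1, bound (14): for independent random matrices `A, B` with values in
`F₂^{(n+Δ)×m}`, `H(A ⊕ S^Δ B) − 2·H(S^Δ A ⊕ S^Δ B) ≤ m · Δ`. -/
theorem entropy_shift_bound_delta {Ω : Type} [Fintype Ω] (n m Δ : ℕ)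
    (p : Ω → ℝ) (hp : ∀ ω, 0 ≤ p ω) (hsum : ∑ ω, p ω = 1)
    (A B : Ω → Matrix (Fin (n + Δ)) (Fin m) (ZMod 2))
    (hAB : IndepRV p A B) :
    entropy2 p (fun ω => A ω + shiftS Δ (B ω))
      - 2 * entropy2 p (fun ω => shiftS Δ (A ω) + shiftS Δ (B ω))
      ≤ (m : ℝ) * (Δ : ℝ) := by
  classical
  -- step 4 : H(S A) ≤ H(S A + S B)
  have hIndepUV : IndepRV p (fun ω => shiftS Δ (A ω)) (fun ω => shiftS Δ (B ω)) :=
    indepRV_comp hAB (shiftS Δ) (shiftS Δ)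
  have hEq : entropy2 p (fun ω => (shiftS Δ (A ω), shiftS Δ (B ω)))
      = entropy2 p (fun ω => shiftS Δ (A ω)) + entropy2 p (fun ω => shiftS Δ (B ω)) :=
    entropy2_pair_of_indep hsum hIndepUV
  have h4a : entropy2 p (fun ω => (shiftS Δ (A ω), shiftS Δ (B ω)))
      ≤ entropy2 p (fun ω => (shiftS Δ (A ω) + shiftS Δ (B ω), shiftS Δ (B ω))) := by
    have hfe : (fun ω => ((shiftS Δ (A ω) + shiftS Δ (B ω)) + shiftS Δ (B ω), shiftS Δ (B ω)))
        = (fun ω => (shiftS Δ (A ω), shiftS Δ (B ω))) := by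
      funext ω
      rw [zmod2_matrix_aux2 (shiftS Δ (A ω)) (shiftS Δ (B ω))]
    calc entropy2 p (fun ω => (shiftS Δ (A ω), shiftS Δ (B ω)))
        = entropy2 p (fun ω => ((shiftS Δ (A ω) + shiftS Δ (B ω)) + shiftS Δ (B ω),
            shiftS Δ (B ω))) := by rw [hfe]
      _ ≤ entropy2 p (fun ω => (shiftS Δ (A ω) + shiftS Δ (B ω), shiftS Δ (B ω))) :=
          entropy2_comp_le hp
            (fun ω => (shiftS Δ (A ω) + shiftS Δ (B ω), shiftS Δ (B ω)))
            (fun z => (z.1 + z.2, z.2))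
  have h4b : entropy2 p (fun ω => (shiftS Δ (A ω) + shiftS Δ (B ω), shiftS Δ (B ω)))
      ≤ entropy2 p (fun ω => shiftS Δ (A ω) + shiftS Δ (B ω))
        + entropy2 p (fun ω => shiftS Δ (B ω)) :=
    entropy2_pair_le hp hsum _ _
  have h4 : entropy2 p (fun ω => shiftS Δ (A ω))
      ≤ entropy2 p (fun ω => shiftS Δ (A ω) + shiftS Δ (B ω)) := by
    linarith
  -- step 1 : H(A + S B) ≤ H(S A + S B) + H(A + S A)
  have h1 : entropy2 p (fun ω => A ω + shiftS Δ (B ω))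
      ≤ entropy2 p (fun ω => shiftS Δ (A ω) + shiftS Δ (B ω))
        + entropy2 p (fun ω => A ω + shiftS Δ (A ω)) := by
    have hX : (fun ω : Ω => A ω + shiftS Δ (B ω))
        = (fun ω => (shiftS Δ (A ω) + shiftS Δ (B ω)) + (A ω + shiftS Δ (A ω))) :=
      funext fun ω => zmod2_matrix_aux1 (A ω) (shiftS Δ (A ω)) (shiftS Δ (B ω))
    calc entropy2 p (fun ω => A ω + shiftS Δ (B ω))
        = entropy2 p (fun ω => (shiftS Δ (A ω) + shiftS Δ (B ω)) + (A ω + shiftS Δ (A ω))) :=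
          by rw [hX]
      _ ≤ entropy2 p (fun ω => (shiftS Δ (A ω) + shiftS Δ (B ω), A ω + shiftS Δ (A ω))) :=
          entropy2_comp_le hp
            (fun ω => (shiftS Δ (A ω) + shiftS Δ (B ω), A ω + shiftS Δ (A ω)))
            (fun z => z.1 + z.2)
      _ ≤ entropy2 p (fun ω => shiftS Δ (A ω) + shiftS Δ (B ω))
            + entropy2 p (fun ω => A ω + shiftS Δ (A ω)) :=
          entropy2_pair_le hp hsum _ _
  -- step 2 : H(A + S A) ≤ H(A)
  have h2 : entropy2 p (fun ω => A ω + shiftS Δ (A ω)) ≤ entropy2 p A :=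
    entropy2_comp_le hp A (fun a => a + shiftS Δ a)
  -- step 3 : H(A) ≤ H(S A) + m Δ
  have hcard : Fintype.card (Fin Δ → Fin m → ZMod 2) = 2 ^ (m * Δ) := by
    rw [Fintype.card_fun, Fintype.card_fun, ZMod.card, Fintype.card_fin,
      Fintype.card_fin, ← pow_mul]
  have hcardpos : 0 < Fintype.card (Fin Δ → Fin m → ZMod 2) := Fintype.card_pos
  have hlogb : Real.logb 2 (Fintype.card (Fin Δ → Fin m → ZMod 2)) = (m : ℝ) * (Δ : ℝ) := by
    rw [hcard]
    push_cast
    rw [Real.logb_pow]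
    simp [Real.logb_self_eq_one]
  have h3 : entropy2 p A ≤ entropy2 p (fun ω => shiftS Δ (A ω)) + (m : ℝ) * (Δ : ℝ) := by
    have hA : A = fun ω => recon n Δ m (shiftS Δ (A ω)) (botRows n Δ m (A ω)) :=
      funext fun ω => (recon_shift n Δ m (A ω)).symm
    calc entropy2 p A
        = entropy2 p (fun ω => recon n Δ m (shiftS Δ (A ω)) (botRows n Δ m (A ω))) := by
          rw [← hA]
      _ ≤ entropy2 p (fun ω => (shiftS Δ (A ω), botRows n Δ m (A ω))) :=
          entropy2_comp_le hp (fun ω => (shiftS Δ (A ω), botRows n Δ m (A ω)))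
            (fun z => recon n Δ m z.1 z.2)
      _ ≤ entropy2 p (fun ω => shiftS Δ (A ω))
            + entropy2 p (fun ω => botRows n Δ m (A ω)) :=
          entropy2_pair_le hp hsum _ _
      _ ≤ entropy2 p (fun ω => shiftS Δ (A ω)) + (m : ℝ) * (Δ : ℝ) := by
          have := entropy2_le_log_card hp hsum (fun ω => botRows n Δ m (A ω)) hcardpos
          rw [hlogb] at this
          linarith
  linarith
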